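/- The Median Deterministic Mechanism (place facility at the median of all n agent locations) has approximation ratio at least m for the maximum total group cost: for each m >= 2 there is a profile with m groups on which the median's mtgc is m times the optimum. -/

import Mathlib

open Finset

variable {n m : ℕ}

/-- Members of group `j`. -/
def grp (g : Fin n → Fin m) (j : Fin m) : Finset (Fin n) :=
  Finset.univ.filter (fun i => g i = j)

/-- Maximum total group cost. -/
noncomputable def mtgc (x : Fin n → ℝ) (g : Fin n → Fin m) (y : ℝ) : ℝ :=
  ⨆ j : Fin m, ∑ i ∈ grp g j, |y - x i|

/-- Maximum average group cost. -/
noncomputable def magc (x : Fin n → ℝ) (g : Fin n → Fin m) (y : ℝ) : ℝ :=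
  ⨆ j : Fin m, (∑ i ∈ grp g j, |y - x i|) / (grp g j).card

/-- Left median of a multiset of reals (`⌈k/2⌉`-th smallest). -/
noncomputable def medianOf (s : Multiset ℝ) : ℝ :=
  (s.sort (· ≤ ·)).getD ((Multiset.card s - 1) / 2) 0

/-- Left median of the locations of the members of group `j`. -/
noncomputable def groupMedian (x : Fin n → ℝ) (g : Fin n → Fin m) (j : Fin m) : ℝ :=
  medianOf ((grp g j).val.map x)

/-- A largest group, ties broken by the smallest index. -/
noncomputable def majGroup (g : Fin n → Fin m) [NeZero m] : Fin m :=
  (Finset.univ.filter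
    (fun j => ∀ k : Fin m, (grp g k).card ≤ (grp g j).card)).min' (by
      obtain ⟨b, -, hb⟩ :=
        Finset.exists_max_image Finset.univ (fun j => (grp g j).card) Finset.univ_nonempty
      exact ⟨b, Finset.mem_filter.mpr ⟨Finset.mem_univ _, fun k => hb k (Finset.mem_univ k)⟩⟩)

/-- Majority Group Deterministic Mechanism. -/
noncomputable def MGDM (x : Fin n → ℝ) (g : Fin n → Fin m) [NeZero m] : ℝ :=
  groupMedian x g (majGroup g)

noncomputable def avgc (x : Fin n → ℝ) (g : Fin n → Fin m) (j : Fin m) (y : ℝ) : ℝ :=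
  (∑ i ∈ grp g j, |y - x i|) / (grp g j).card

noncomputable def maxc (x : Fin n → ℝ) (g : Fin n → Fin m) (j : Fin m) (y : ℝ) : ℝ :=
  sSup ((fun i => |y - x i|) '' {i | g i = j})

noncomputable def minc (x : Fin n → ℝ) (g : Fin n → Fin m) (j : Fin m) (y : ℝ) : ℝ :=
  sInf ((fun i => |y - x i|) '' {i | g i = j})

noncomputable def IIF1 (x : Fin n → ℝ) (g : Fin n → Fin m) (y : ℝ) : ℝ :=
  (⨆ j : Fin m, avgc x g j y) + ⨆ j : Fin m, (maxc x g j y - minc x g j y)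
/-- Median of all agent locations (the `⌈n/2⌉`-th smallest). -/
noncomputable def allMedian (x : Fin n → ℝ) : ℝ :=
  medianOf (Finset.univ.val.map x)

/-- The Median Deterministic Mechanism has approximation ratio at least `m`
for the maximum total group cost: for every `m ≥ 2` there is a profile with
`m` groups where the median's `mtgc` is `m` while the optimum is `1`. -/
theorem median_calc (m : ℕ) (hm : 2 ≤ m) (x : Fin (m+m) → ℝ)
    (hx : x = fun i : Fin (m+m) => if (i:ℕ) < m then (0:ℝ) else 1) :
    allMedian x = 0 := by
  have hofn : List.ofFn x = List.replicate m (0:ℝ) ++ List.replicate m 1 := by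
    rw [List.ofFn_add]
    congr 1
    · rw [hx]; rw [← List.ofFn_const m (0:ℝ)]; congr 1; ext i; simp [Fin.castAdd, i.isLt]
    · rw [hx]; rw [← List.ofFn_const m (1:ℝ)]; congr 1; ext i; simp
  have hsorted : List.Pairwise (· ≤ ·) (List.replicate m (0:ℝ) ++ List.replicate m 1) := by
    rw [List.pairwise_append]
    refine ⟨List.pairwise_replicate.2 (by simp), List.pairwise_replicate.2 (by simp), ?_⟩
    intro a ha b hb
    rw [List.eq_of_mem_replicate ha, List.eq_of_mem_replicate hb]; norm_num
  have hsort : (Finset.univ.val.map x).sort (· ≤ ·)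
      = List.replicate m (0:ℝ) ++ List.replicate m 1 := by
    apply List.Perm.eq_of_pairwise' (Multiset.pairwise_sort _ _) hsorted
    rw [← Multiset.coe_eq_coe, Multiset.sort_eq, Fin.univ_val_map, hofn]
  rw [allMedian, medianOf, hsort]
  have hcard : Multiset.card (Finset.univ.val.map x) = m + m := by simp
  rw [hcard]
  have h1 : (m + m - 1)/2 = m - 1 := by omega
  rw [h1]
  rw [List.getD_eq_getElem?_getD, List.getElem?_append, if_pos (by simp; omega),
    List.getElem?_replicate, if_pos (by omega)]
  simp

theorem mtgc_calc (m : ℕ) (hm : 2 ≤ m) (x : Fin (m+m) → ℝ) (g : Fin (m+m) → Fin m)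
    (hx : x = fun i : Fin (m+m) => if (i:ℕ) < m then (0:ℝ) else 1)
    (hg : g = fun i : Fin (m+m) => if h : (i:ℕ) < m then (⟨i, h⟩ : Fin m) else ⟨0, by omega⟩)
    (y : ℝ) :
    mtgc x g y = |y| + m*|y-1| := by
  have hm0 : 0 < m := by omega
  have hS : ∀ j : Fin m, ∑ i ∈ grp g j, |y - x i|
      = |y| + if j = ⟨0, hm0⟩ then m*|y-1| else 0 := by
    intro j
    rw [grp, Finset.sum_filter, Fin.sum_univ_add]
    have h1 : ∀ i : Fin m,
        (if g (Fin.castAdd m i) = j then |y - x (Fin.castAdd m i)| else 0)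
        = if i = j then |y| else 0 := by
      intro i
      have : g (Fin.castAdd m i) = i := by
        rw [hg]; simp [Fin.castAdd, i.isLt]
      rw [this, hx]
      simp [Fin.castAdd, i.isLt]
    have h2 : ∀ i : Fin m,
        (if g (Fin.natAdd m i) = j then |y - x (Fin.natAdd m i)| else 0)
        = if j = ⟨0, hm0⟩ then |y - 1| else 0 := by
      intro i
      have hge : ¬ ((Fin.natAdd m i : Fin (m+m)) : ℕ) < m := by simp
      have : g (Fin.natAdd m i) = ⟨0, hm0⟩ := by rw [hg]; simp [hge]
      rw [this, hx]
      simp only [hge, if_false]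
      by_cases hj : j = ⟨0, hm0⟩ <;> simp [hj, eq_comm]
    simp only [h1, h2]
    rw [Finset.sum_ite_eq' Finset.univ j (fun _ => |y|), if_pos (Finset.mem_univ j),
      Finset.sum_const]
    by_cases hj : j = ⟨0, hm0⟩ <;> simp [hj]
  have hSle : ∀ j : Fin m, ∑ i ∈ grp g j, |y - x i| ≤ |y| + m*|y-1| := by
    intro j
    rw [hS j]
    split_ifs
    · exact le_rfl
    · have h1 : (0:ℝ) ≤ (m:ℝ)*|y-1| := by positivity
      linarith
  have : Nonempty (Fin m) := ⟨⟨0, hm0⟩⟩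
  apply le_antisymm
  · exact ciSup_le fun j => hSle j
  · have := le_ciSup (Finite.bddAbove_range fun j : Fin m => ∑ i ∈ grp g j, |y - x i|) (⟨0, hm0⟩ : Fin m)
    rw [hS] at this
    simpa [mtgc] using this

theorem stmt8 (m : ℕ) (hm : 2 ≤ m) :
    ∃ (n : ℕ) (x : Fin n → ℝ) (g : Fin n → Fin m),
      allMedian x = 0 ∧ mtgc x g (allMedian x) = (m : ℝ) ∧
      mtgc x g 1 = 1 ∧ ∀ y : ℝ, mtgc x g 1 ≤ mtgc x g y := by
  refine ⟨m+m, fun i : Fin (m+m) => if (i:ℕ) < m then (0:ℝ) else 1,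
    fun i : Fin (m+m) => if h : (i:ℕ) < m then (⟨i, h⟩ : Fin m) else ⟨0, by omega⟩,
    ?_, ?_, ?_, ?_⟩
  · exact median_calc m hm _ rfl
  · rw [median_calc m hm _ rfl, mtgc_calc m hm _ _ rfl rfl]
    simp
  · rw [mtgc_calc m hm _ _ rfl rfl]
    simp
  · intro y
    rw [mtgc_calc m hm _ _ rfl rfl, mtgc_calc m hm _ _ rfl rfl]
    have h1 := abs_add_le y (1-y)
    have h2 : |1-y| = |y-1| := abs_sub_comm 1 y
    have h3 : (0:ℝ) ≤ |y-1| := abs_nonneg _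
    have h4 : (2:ℝ) ≤ (m:ℝ) := by exact_mod_cast hm
    simp only [add_sub_cancel, abs_one, h2] at h1
    have h5 : |(1:ℝ)| + (m:ℝ)*|1-1| = 1 := by simp
    rw [h5]
    nlinarith [abs_nonneg y]
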